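/- For l1, l2, l3 ∈ ℕ and G = Θ(l1,l2,l3), for every m ≥ 2, P(G,m) = [((m−1)^{l1+1} − (−1)^{l1}(m−1))((m−1)^{l2+1} − (−1)^{l2}(m−1))((m−1)^{l3+1} − (−1)^{l3}(m−1))] / (m(m−1))^2 + [((m−1)^{l1} + (−1)^{l1}(m−1))((m−1)^{l2} + (−1)^{l2}(m−1))((m−1)^{l3} + (−1)^{l3}(m−1))] / m^2. -/

import Mathlib

open SimpleGraph Finset

/-- A proper `L`-coloring of `G`: each vertex gets a color from its list and adjacent
vertices get different colors. -/
def ProperLColoring {V : Type*} (G : SimpleGraph V) (L : V → Finset ℕ) (f : V → ℕ) : Prop :=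
  (∀ v, f v ∈ L v) ∧ ∀ ⦃u w⦄, G.Adj u w → f u ≠ f w

/-- `P(G,L)`: the number of proper `L`-colorings of `G`. -/
noncomputable def PList {V : Type*} (G : SimpleGraph V) (L : V → Finset ℕ) : ℕ :=
  Nat.card {f : V → ℕ // ProperLColoring G L f}

/-- `P(G,m)`: the number of proper colorings of `G` with colors from `{1, …, m}`. -/
noncomputable def PChrom {V : Type*} (G : SimpleGraph V) (m : ℕ) : ℕ :=
  PList G (fun _ => Finset.Icc 1 m)

/-- The list color function `P_ℓ(G,m)`: the minimum of `P(G,L)` over all `m`-assignments. -/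
noncomputable def PListFn {V : Type*} (G : SimpleGraph V) (m : ℕ) : ℕ :=
  sInf {n | ∃ L : V → Finset ℕ, (∀ v, (L v).card = m) ∧ n = PList G L}

/-- `G` is enumeratively chromatic-choosable: `P_ℓ(G,m) = P(G,m)` for all `m ∈ ℕ = {1,2,…}`. -/
def EnumChromChoosable {V : Type*} (G : SimpleGraph V) : Prop :=
  ∀ m : ℕ, 1 ≤ m → PListFn G m = PChrom G m

/-- Vertices of the theta graph `Θ(l1,l2,l3)`: the end vertices `u = Sum.inl false` and
`v = Sum.inl true`, together with the `lᵢ - 1` internal vertices of the `i`-th path. -/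
abbrev ThetaVert (l1 l2 l3 : ℕ) : Type :=
  Bool ⊕ (Σ i : Fin 3, Fin (![l1, l2, l3] i - 1))

/-- Edges of the theta graph (up to symmetrization): the internal vertices of the `i`-th path,
in order, form a path from `u` to `v`; if some path has length 1 then `u` and `v` are adjacent. -/
def thetaRel (l1 l2 l3 : ℕ) : ThetaVert l1 l2 l3 → ThetaVert l1 l2 l3 → Prop :=
  fun a b =>
    match a, b with
    | Sum.inl false, Sum.inl true => l1 = 1 ∨ l2 = 1 ∨ l3 = 1
    | Sum.inl false, Sum.inr ⟨_, j⟩ => (j : ℕ) = 0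
    | Sum.inr ⟨i, j⟩, Sum.inl true => (j : ℕ) + 2 = ![l1, l2, l3] i
    | Sum.inr ⟨i, j⟩, Sum.inr ⟨i', j'⟩ => i = i' ∧ (j : ℕ) + 1 = (j' : ℕ)
    | _, _ => False

/-- The theta graph `Θ(l1,l2,l3)`: two end vertices joined by three internally disjoint
paths of lengths `l1`, `l2`, `l3`. -/
def thetaGraph (l1 l2 l3 : ℕ) : SimpleGraph (ThetaVert l1 l2 l3) :=
  SimpleGraph.fromRel (thetaRel l1 l2 l3)

/-- A DP-cover `(L, H)` of `G`. -/
structure DPCover {V : Type*} (G : SimpleGraph V) (W : Type*) where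
  H : SimpleGraph W
  L : V → Set W
  partition : ∀ w : W, ∃! v : V, w ∈ L v
  matching : ∀ ⦃u v : V⦄, G.Adj u v → ∀ ⦃x y y' : W⦄, x ∈ L u → y ∈ L v → y' ∈ L v →
      H.Adj x y → H.Adj x y' → y = y'
  cross : ∀ ⦃x y : W⦄, H.Adj x y → ∃ u v, G.Adj u v ∧ x ∈ L u ∧ y ∈ L v

/-- A proper `H`-coloring: an independent transversal of the cover. -/
def DPCover.IsProperColoring {V W : Type*} {G : SimpleGraph V} (C : DPCover G W)
    (T : Set W) : Prop :=
  (∀ v : V, ∃! w : W, w ∈ T ∧ w ∈ C.L v) ∧ ∀ ⦃x y⦄, x ∈ T → y ∈ T → ¬ C.H.Adj x y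

/-- `P_DP(G, H)`: the number of proper `H`-colorings of `G`. -/
noncomputable def PDPCount {V W : Type*} {G : SimpleGraph V} (C : DPCover G W) : ℕ :=
  Nat.card {T : Set W // C.IsProperColoring T}

/-- The DP color function `P_DP(G,m)`: the minimum of `P_DP(G,H)` over all `m`-fold covers. -/
noncomputable def PDP {V : Type*} (G : SimpleGraph V) (m : ℕ) : ℕ :=
  sInf {n | ∃ (W : Type) (C : DPCover G W), (∀ v, Nat.card ↥(C.L v) = m) ∧ n = PDPCount C}

/-- A cover is full if the matching between the lists of adjacent vertices is perfect. -/
def DPCover.IsFull {V W : Type*} {G : SimpleGraph V} (C : DPCover G W) : Prop :=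
  ∀ ⦃u v : V⦄, G.Adj u v → ∀ x ∈ C.L u, ∃! y, y ∈ C.L v ∧ C.H.Adj x y

/-- (# walks of length l between equal endpoints, # between distinct endpoints) in K_m. -/
def wpair (m : ℕ) : ℕ → ℕ × ℕ
  | 0 => (1, 0)
  | l+1 => ((m-1) * (wpair m l).2, (wpair m l).1 + (m-2) * (wpair m l).2)

/-- Proper walks of length `l` from `a` to `b` with values in `Icc 1 m`. -/
def walkSet (m l a b : ℕ) : Finset (Fin (l+1) → ℕ) :=
  (Fintype.piFinset fun _ => Finset.Icc 1 m).filter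
    fun c => c ⟨0, Nat.succ_pos l⟩ = a ∧ c ⟨l, Nat.lt_succ_self l⟩ = b ∧
      ∀ j : Fin l, c ⟨(j:ℕ), by omega⟩ ≠ c ⟨(j:ℕ)+1, by omega⟩

lemma mem_walkSet {m l a b : ℕ} {c : Fin (l+1) → ℕ} :
    c ∈ walkSet m l a b ↔ (∀ j, c j ∈ Finset.Icc 1 m) ∧ c ⟨0, Nat.succ_pos l⟩ = a ∧
      c ⟨l, Nat.lt_succ_self l⟩ = b ∧
      ∀ (j : ℕ) (h : j < l), c ⟨j, by omega⟩ ≠ c ⟨j+1, by omega⟩ := by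
  simp only [walkSet, Finset.mem_filter, Fintype.mem_piFinset, and_assoc]
  constructor
  · rintro ⟨h1, h2, h3, h4⟩
    exact ⟨h1, h2, h3, fun j h => h4 ⟨j, h⟩⟩
  · rintro ⟨h1, h2, h3, h4⟩
    exact ⟨h1, h2, h3, fun j => h4 (j:ℕ) j.isLt⟩

lemma walkSet_card (m : ℕ) (l : ℕ) : ∀ a b, a ∈ Finset.Icc 1 m → b ∈ Finset.Icc 1 m →
    (walkSet m l a b).card = if a = b then (wpair m l).1 else (wpair m l).2 := by
  induction l with
  | zero =>
    intro a b ha hb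
    by_cases hab : a = b
    · subst hab
      rw [if_pos rfl]
      have : walkSet m 0 a a = {fun _ => a} := by
        ext c
        simp only [mem_walkSet, Finset.mem_singleton]
        constructor
        · rintro ⟨-, h0, -, -⟩
          funext j
          have : j = ⟨0, Nat.succ_pos 0⟩ := by omega
          rw [this, h0]
        · rintro rfl
          exact ⟨fun _ => ha, rfl, rfl, fun j h => by omega⟩
      rw [this]; simp [wpair]
    · rw [if_neg hab]
      have : walkSet m 0 a b = ∅ := by
        ext c
        simp only [mem_walkSet, Finset.notMem_empty, iff_false]
        rintro ⟨-, h0, hl, -⟩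
        exact hab (h0 ▸ hl ▸ rfl)
      rw [this]; simp [wpair]
  | succ l ih =>
    intro a b ha hb
    have hcard : ((Finset.Icc 1 m).erase b).card = m - 1 := by
      rw [Finset.card_erase_of_mem hb, Nat.card_Icc]; omega
    have key : (walkSet m (l+1) a b).card =
        (((Finset.Icc 1 m).erase b).sigma (fun c => walkSet m l a c)).card := by
      refine Finset.card_bij'
        (fun g _ => (⟨g ⟨l, by omega⟩, fun j => g ⟨j, by omega⟩⟩ :
          Σ _ : ℕ, Fin (l+1) → ℕ))
        (fun p _ => fun k : Fin (l+2) => if h : (k:ℕ) < l + 1 then p.2 ⟨k, h⟩ else b)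
        ?_ ?_ ?_ ?_
      · -- forward membership
        intro g hg
        rw [mem_walkSet] at hg
        obtain ⟨hpi, h0, hL, hstep⟩ := hg
        refine Finset.mem_sigma.2 ⟨Finset.mem_erase.2 ⟨?_, hpi _⟩, ?_⟩
        · have := hstep l (by omega)
          simpa [hL] using this
        · rw [mem_walkSet]
          refine ⟨fun j => hpi _, by simpa using h0, rfl, ?_⟩
          intro j h
          exact hstep j (by omega)
      · -- backward membership
        rintro ⟨c, w⟩ hp
        rw [Finset.mem_sigma] at hp
        obtain ⟨hc, hw⟩ := hp
        rw [Finset.mem_erase] at hc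
        rw [mem_walkSet] at hw
        obtain ⟨hpi, h0, hL, hstep⟩ := hw
        rw [mem_walkSet]
        refine ⟨?_, ?_, ?_, ?_⟩
        · intro j
          dsimp only
          split
          · exact hpi _
          · exact hb
        · simpa using h0
        · simp
        · intro j h
          dsimp only
          split <;> rename_i h1
          · split <;> rename_i h2
            · exact hstep j (by omega)
            · have hw : w ⟨j, by omega⟩ = c := by
                have he : (⟨j, by omega⟩ : Fin (l+1)) = ⟨l, by omega⟩ := by
                  apply Fin.ext; dsimp; omega
                rw [he]; exact hL
              rw [hw]; exact hc.1
          · omega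
      · -- left inverse
        intro g hg
        rw [mem_walkSet] at hg
        funext k
        dsimp only
        split <;> rename_i h1
        · rfl
        · have : k = ⟨l+1, by omega⟩ := by
            apply Fin.ext; dsimp; omega
          rw [this]; exact hg.2.2.1.symm
      · -- right inverse
        rintro ⟨c, w⟩ hp
        rw [Finset.mem_sigma, mem_walkSet] at hp
        refine Sigma.ext ?_ ?_
        · simpa using hp.2.2.2.1
        · refine heq_of_eq ?_
          funext j
          simp [j.isLt]
    rw [key, Finset.card_sigma]
    have hsum : ∀ c ∈ (Finset.Icc 1 m).erase b, (walkSet m l a c).card =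
        if a = c then (wpair m l).1 else (wpair m l).2 :=
      fun c hc => ih a c ha (Finset.mem_of_mem_erase hc)
    rw [Finset.sum_congr rfl hsum]
    by_cases hab : a = b
    · subst hab
      rw [if_pos rfl]
      rw [Finset.sum_congr rfl (fun c hc =>
        if_neg (fun h => (Finset.mem_erase.1 hc).1 h.symm))]
      rw [Finset.sum_const, hcard]
      show (m-1) * (wpair m l).2 = (wpair m (l+1)).1
      rfl
    · rw [if_neg hab]
      have haeb : a ∈ (Finset.Icc 1 m).erase b := Finset.mem_erase.2 ⟨hab, ha⟩
      rw [← Finset.add_sum_erase _ _ haeb, if_pos rfl]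
      have : ∀ c ∈ ((Finset.Icc 1 m).erase b).erase a,
          (if a = c then (wpair m l).1 else (wpair m l).2) = (wpair m l).2 := by
        intro c hc
        exact if_neg (fun h => (Finset.mem_erase.1 hc).1 h.symm)
      rw [Finset.sum_congr rfl this, Finset.sum_const]
      rw [Finset.card_erase_of_mem haeb, hcard]
      show (wpair m l).1 + (m - 1 - 1) * (wpair m l).2 = (wpair m (l+1)).2
      have : m - 1 - 1 = m - 2 := by omega
      rw [this]
      rfl

lemma wpair_formula (m : ℕ) (hm : 2 ≤ m) (l : ℕ) :
    ((wpair m l).1 : ℚ) * m = (m-1)^l + (m-1)*(-1)^l ∧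
    ((wpair m l).2 : ℚ) * m = (m-1)^l - (-1)^l := by
  have hm1 : ((m - 1 : ℕ) : ℚ) = (m : ℚ) - 1 := by
    push_cast [Nat.cast_sub (by omega : 1 ≤ m)]; ring
  have hm2 : ((m - 2 : ℕ) : ℚ) = (m : ℚ) - 2 := by
    push_cast [Nat.cast_sub (by omega : 2 ≤ m)]; ring
  have hmne : (m : ℚ) ≠ 0 := by positivity
  induction l with
  | zero => simp [wpair]
  | succ l ih =>
    obtain ⟨ih1, ih2⟩ := ih
    constructor
    · show (((m-1) * (wpair m l).2 : ℕ) : ℚ) * m = _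
      push_cast [hm1]
      have : ((wpair m l).2 : ℚ) = ((m:ℚ)-1)^l/m - (-1)^l/m := by
        field_simp
        linarith [ih2]
      rw [this]
      field_simp
      ring
    · show (((wpair m l).1 + (m-2) * (wpair m l).2 : ℕ) : ℚ) * m = _
      push_cast [hm2]
      have e1 : ((wpair m l).1 : ℚ) = ((m:ℚ)-1)^l/m + ((m:ℚ)-1)*(-1)^l/m := by
        field_simp; linarith [ih1]
      have e2 : ((wpair m l).2 : ℚ) = ((m:ℚ)-1)^l/m - (-1)^l/m := by
        field_simp; linarith [ih2]
      rw [e1, e2]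
      field_simp
      ring

section ThetaAux2

variable (l1 l2 l3 : ℕ)

/-- Extract the walk along the `i`-th path from a coloring `f`. -/
def wk (i : Fin 3) (f : ThetaVert l1 l2 l3 → ℕ) : Fin (![l1,l2,l3] i + 1) → ℕ :=
  fun j => if h0 : (j:ℕ) = 0 then f (Sum.inl false)
    else if hl : (j:ℕ) = ![l1,l2,l3] i then f (Sum.inl true)
    else f (Sum.inr ⟨i, ⟨(j:ℕ) - 1, by have := j.isLt; omega⟩⟩)

variable {l1 l2 l3}

lemma wk_zero (i : Fin 3) (f : ThetaVert l1 l2 l3 → ℕ) (h : (0:ℕ) < ![l1,l2,l3] i + 1) :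
    wk l1 l2 l3 i f ⟨0, h⟩ = f (Sum.inl false) := by
  simp [wk]

lemma wk_last (i : Fin 3) (f : ThetaVert l1 l2 l3 → ℕ) {k : ℕ} (hk : k = ![l1,l2,l3] i)
    (h : k < ![l1,l2,l3] i + 1) (hpos : 1 ≤ ![l1,l2,l3] i) :
    wk l1 l2 l3 i f ⟨k, h⟩ = f (Sum.inl true) := by
  simp only [wk]
  rw [dif_neg (by omega), dif_pos hk]

lemma wk_mid (i : Fin 3) (f : ThetaVert l1 l2 l3 → ℕ) {k : ℕ}
    (j' : Fin (![l1,l2,l3] i - 1)) (h0 : k ≠ 0) (hl : (j' : ℕ) = k - 1)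
    (h : k < ![l1,l2,l3] i + 1) :
    wk l1 l2 l3 i f ⟨k, h⟩ = f (Sum.inr ⟨i, j'⟩) := by
  have hb := j'.isLt
  simp only [wk]
  rw [dif_neg h0, dif_neg (by omega : ¬ k = ![l1,l2,l3] i)]
  exact congrArg f (congrArg Sum.inr (Sigma.ext rfl (heq_of_eq (Fin.ext hl.symm))))

lemma n_pos (h1 : 1 ≤ l1) (h2 : 1 ≤ l2) (h3 : 1 ≤ l3) (i : Fin 3) : 1 ≤ ![l1,l2,l3] i := by
  fin_cases i <;> simpa

lemma n_one (i : Fin 3) (hi : ![l1,l2,l3] i = 1) : l1 = 1 ∨ l2 = 1 ∨ l3 = 1 := by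
  fin_cases i
  · exact Or.inl hi
  · exact Or.inr (Or.inl hi)
  · exact Or.inr (Or.inr hi)

/-- Properness of a coloring of the theta graph in terms of the three walks. -/
lemma proper_iff (h1 : 1 ≤ l1) (h2 : 1 ≤ l2) (h3 : 1 ≤ l3) (f : ThetaVert l1 l2 l3 → ℕ) :
    (∀ ⦃x y⦄, (thetaGraph l1 l2 l3).Adj x y → f x ≠ f y) ↔
    ∀ (i : Fin 3) (j : ℕ) (h : j < ![l1,l2,l3] i),
      wk l1 l2 l3 i f ⟨j, by omega⟩ ≠ wk l1 l2 l3 i f ⟨j+1, by omega⟩ := by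
  have hn := n_pos h1 h2 h3
  constructor
  · intro hp i j h
    by_cases hj0 : j = 0
    · subst hj0
      rw [wk_zero]
      by_cases hje : (1:ℕ) = ![l1,l2,l3] i
      · rw [wk_last i f hje _ (hn i)]
        apply hp
        rw [thetaGraph, SimpleGraph.fromRel_adj]
        exact ⟨by simp, Or.inl (n_one i hje.symm)⟩
      · rw [wk_mid i f ⟨0, by omega⟩ (by omega) rfl]
        apply hp
        rw [thetaGraph, SimpleGraph.fromRel_adj]
        exact ⟨by simp, Or.inl rfl⟩
    · by_cases hje : j + 1 = ![l1,l2,l3] i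
      · rw [wk_mid i f ⟨j-1, by omega⟩ hj0 rfl, wk_last i f hje _ (hn i)]
        apply hp
        rw [thetaGraph, SimpleGraph.fromRel_adj]
        refine ⟨by simp, Or.inl ?_⟩
        show (j - 1) + 2 = ![l1,l2,l3] i
        omega
      · rw [wk_mid i f ⟨j-1, by omega⟩ hj0 rfl,
          wk_mid i f ⟨j, by omega⟩ (by omega) (by show j = j+1-1; omega)]
        apply hp
        rw [thetaGraph, SimpleGraph.fromRel_adj]
        refine ⟨?_, Or.inl ?_⟩
        · simp only [ne_eq, Sum.inr.injEq, Sigma.mk.inj_iff, heq_eq_eq, true_and,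
            Fin.mk.injEq]
          omega
        · exact ⟨rfl, by simp; omega⟩
  · intro hw x y hadj
    rw [thetaGraph, SimpleGraph.fromRel_adj] at hadj
    obtain ⟨hne, hrel⟩ := hadj
    have key : ∀ x y, thetaRel l1 l2 l3 x y → f x ≠ f y := by
      rintro (b | ⟨i, j⟩) (b' | ⟨i', j'⟩) hr
      · cases b <;> cases b'
        · exact hr.elim
        · -- u - v edge : some path has length 1
          have hex : ∃ i : Fin 3, ![l1,l2,l3] i = 1 := by
            rcases hr with h | h | h
            exacts [⟨0, h⟩, ⟨1, h⟩, ⟨2, h⟩]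
          obtain ⟨i, hi⟩ := hex
          have := hw i 0 (by omega)
          rwa [wk_zero, wk_last i f hi.symm _ (hn i)] at this
        · exact hr.elim
        · exact hr.elim
      · cases b
        · -- u - first internal vertex of path i'
          have hj' : (j' : ℕ) = 0 := hr
          have := hw i' 0 (by omega)
          rwa [wk_zero, wk_mid i' f j' (by omega) (by omega)] at this
        · exact hr.elim
      · cases b'
        · exact hr.elim
        · -- last internal vertex of path i - v
          have hji : (j : ℕ) + 2 = ![l1,l2,l3] i := hr
          have := hw i ((j:ℕ)+1) (by omega)
          rwa [wk_mid i f j (by omega) (by omega),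
            wk_last i f (by omega : (j:ℕ)+1+1 = _) _ (hn i)] at this
      · -- two internal vertices of the same path
        obtain ⟨hii, hjj⟩ := hr
        subst hii
        have hlt : (j' : ℕ) < ![l1,l2,l3] i - 1 := j'.isLt
        have := hw i ((j:ℕ)+1) (by omega)
        rwa [wk_mid i f j (by omega) (by omega),
          wk_mid i f j' (by omega) (by omega)] at this
    rcases hrel with hr | hr
    · exact key x y hr
    · exact (key y x hr).symm

end ThetaAux2

section ThetaMain

variable (l1 l2 l3 : ℕ)

/-- Reconstruct a coloring from endpoint colors and the three walks. -/
def rec3 (a b : ℕ) (W : ∀ i : Fin 3, Fin (![l1,l2,l3] i + 1) → ℕ) :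
    ThetaVert l1 l2 l3 → ℕ
  | Sum.inl false => a
  | Sum.inl true => b
  | Sum.inr ⟨i, j⟩ => W i ⟨(j:ℕ)+1, by have := j.isLt; omega⟩

variable {l1 l2 l3}

lemma wk_rec3 (h1 : 1 ≤ l1) (h2 : 1 ≤ l2) (h3 : 1 ≤ l3) (a b : ℕ)
    (W : ∀ i : Fin 3, Fin (![l1,l2,l3] i + 1) → ℕ) (i : Fin 3)
    (hW0 : W i ⟨0, by omega⟩ = a) (hWl : W i ⟨![l1,l2,l3] i, by omega⟩ = b) :
    wk l1 l2 l3 i (rec3 l1 l2 l3 a b W) = W i := by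
  have hn := n_pos h1 h2 h3 i
  funext j
  obtain ⟨k, hk⟩ := j
  by_cases hk0 : k = 0
  · subst hk0
    rw [wk_zero]
    show a = W i ⟨0, hk⟩
    exact hW0.symm
  · by_cases hke : k = ![l1,l2,l3] i
    · rw [wk_last i _ hke _ hn]
      show b = W i ⟨k, hk⟩
      rw [show (⟨k, hk⟩ : Fin _) = ⟨![l1,l2,l3] i, by omega⟩ from Fin.ext hke]
      exact hWl.symm
    · rw [wk_mid i _ ⟨k-1, by omega⟩ hk0 rfl]
      show W i ⟨k-1+1, by omega⟩ = W i ⟨k, hk⟩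
      exact congrArg (W i) (Fin.ext (show k-1+1 = k by omega))

lemma theta_count (h1 : 1 ≤ l1) (h2 : 1 ≤ l2) (h3 : 1 ≤ l3) (m : ℕ) :
    PChrom (thetaGraph l1 l2 l3) m =
      ∑ p ∈ Finset.Icc 1 m ×ˢ Finset.Icc 1 m,
        ∏ i : Fin 3, (walkSet m (![l1,l2,l3] i) p.1 p.2).card := by
  classical
  have hset : PChrom (thetaGraph l1 l2 l3) m =
      ((Fintype.piFinset fun _ : ThetaVert l1 l2 l3 => Finset.Icc 1 m).filter
        (fun f => ∀ ⦃x y⦄, (thetaGraph l1 l2 l3).Adj x y → f x ≠ f y)).card := by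
    rw [PChrom, PList, ← Nat.card_eq_finsetCard]
    apply Nat.card_congr
    apply Equiv.subtypeEquivRight
    intro f
    simp only [ProperLColoring, Finset.mem_filter, Fintype.mem_piFinset]
  rw [hset]
  rw [Finset.card_eq_sum_card_fiberwise
    (f := fun f => (f (Sum.inl false), f (Sum.inl true)))
    (t := Finset.Icc 1 m ×ˢ Finset.Icc 1 m)
    (by
      intro f hf
      rw [Finset.mem_coe, Finset.mem_filter, Fintype.mem_piFinset] at hf
      exact Finset.mem_coe.2 (Finset.mem_product.2 ⟨hf.1 _, hf.1 _⟩))]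
  apply Finset.sum_congr rfl
  rintro ⟨a, b⟩ hab
  rw [Finset.mem_product] at hab
  obtain ⟨ha, hb⟩ := hab
  rw [← Fintype.card_piFinset]
  have hi : ∀ f ∈ ((Fintype.piFinset fun _ : ThetaVert l1 l2 l3 => Finset.Icc 1 m).filter
        (fun f => ∀ ⦃x y⦄, (thetaGraph l1 l2 l3).Adj x y → f x ≠ f y)).filter
        (fun f => (f (Sum.inl false), f (Sum.inl true)) = (a, b)),
      (fun i => wk l1 l2 l3 i f) ∈
        Fintype.piFinset (fun i : Fin 3 => walkSet m (![l1,l2,l3] i) a b) := by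
    intro f hf
    rw [Finset.mem_filter, Finset.mem_filter, Fintype.mem_piFinset] at hf
    obtain ⟨⟨hpi, hprop⟩, hpair⟩ := hf
    have hfu : f (Sum.inl false) = a := congrArg Prod.fst hpair
    have hfv : f (Sum.inl true) = b := congrArg Prod.snd hpair
    rw [Fintype.mem_piFinset]
    intro i
    rw [mem_walkSet]
    refine ⟨?_, ?_, ?_, ?_⟩
    · intro j
      have : ∃ x, wk l1 l2 l3 i f j = f x := by
        simp only [wk]
        split
        · exact ⟨_, rfl⟩
        · split
          · exact ⟨_, rfl⟩
          · exact ⟨_, rfl⟩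
      obtain ⟨x, hx⟩ := this
      rw [hx]; exact hpi x
    · rw [wk_zero]; exact hfu
    · rw [wk_last i f rfl _ (n_pos h1 h2 h3 i)]; exact hfv
    · intro j h
      exact (proper_iff h1 h2 h3 f).1 hprop i j h
  have hj : ∀ W ∈ Fintype.piFinset (fun i : Fin 3 => walkSet m (![l1,l2,l3] i) a b),
      rec3 l1 l2 l3 a b W ∈
        ((Fintype.piFinset fun _ : ThetaVert l1 l2 l3 => Finset.Icc 1 m).filter
          (fun f => ∀ ⦃x y⦄, (thetaGraph l1 l2 l3).Adj x y → f x ≠ f y)).filter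
          (fun f => (f (Sum.inl false), f (Sum.inl true)) = (a, b)) := by
    intro W hW
    rw [Fintype.mem_piFinset] at hW
    have hWm := fun i => mem_walkSet.1 (hW i)
    have hrw : ∀ i, wk l1 l2 l3 i (rec3 l1 l2 l3 a b W) = W i := fun i =>
      wk_rec3 h1 h2 h3 a b W i ((hWm i).2.1) ((hWm i).2.2.1)
    rw [Finset.mem_filter, Finset.mem_filter, Fintype.mem_piFinset]
    refine ⟨⟨?_, ?_⟩, rfl⟩
    · rintro (b' | ⟨i, j⟩)
      · cases b'
        · exact ha
        · exact hb
      · exact (hWm i).1 _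
    · rw [proper_iff h1 h2 h3]
      intro i j h
      rw [hrw i]
      exact (hWm i).2.2.2 j h
  refine Finset.card_bij'
    (fun f _ => fun i => wk l1 l2 l3 i f)
    (fun W _ => rec3 l1 l2 l3 a b W) hi hj ?_ ?_
  · -- left inverse
    intro f hf
    rw [Finset.mem_filter] at hf
    have hfu : f (Sum.inl false) = a := congrArg Prod.fst hf.2
    have hfv : f (Sum.inl true) = b := congrArg Prod.snd hf.2
    funext x
    rcases x with (b'' | ⟨i, j⟩)
    · cases b''
      · exact hfu.symm
      · exact hfv.symm
    · clear hi hj hset hf hfu hfv ha hb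
      have hjb : (j:ℕ) < ![l1,l2,l3] i - 1 := j.isLt
      have h0 : (j:ℕ)+1 ≠ 0 := by omega
      have hlt : (j:ℕ)+1 < ![l1,l2,l3] i + 1 := by omega
      have hl : (j:ℕ) = ((j:ℕ)+1) - 1 := by omega
      exact wk_mid i f j h0 hl hlt
  · -- right inverse
    intro W hW
    rw [Fintype.mem_piFinset] at hW
    funext i
    have hWm := mem_walkSet.1 (hW i)
    exact wk_rec3 h1 h2 h3 a b W i hWm.2.1 hWm.2.2.1

end ThetaMain


theorem theta_chromatic_polynomial (l1 l2 l3 : ℕ)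
    (h1 : 1 ≤ l1) (h2 : 1 ≤ l2) (h3 : 1 ≤ l3) (m : ℕ) (hm : 2 ≤ m) :
    (PChrom (thetaGraph l1 l2 l3) m : ℚ) =
      (((m - 1) ^ (l1 + 1) - (-1) ^ l1 * (m - 1)) *
        ((m - 1) ^ (l2 + 1) - (-1) ^ l2 * (m - 1)) *
        ((m - 1) ^ (l3 + 1) - (-1) ^ l3 * (m - 1))) / (m * (m - 1)) ^ 2 +
      (((m - 1) ^ l1 + (-1) ^ l1 * (m - 1)) *
        ((m - 1) ^ l2 + (-1) ^ l2 * (m - 1)) *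
        ((m - 1) ^ l3 + (-1) ^ l3 * (m - 1))) / m ^ 2 := by
  have hn1 : (1:ℕ) ≤ m := by omega
  have hmQ : ((m:ℚ)) ≠ 0 := by positivity
  have hm1Q : ((m:ℚ) - 1) ≠ 0 := by
    have : (2:ℚ) ≤ m := by exact_mod_cast hm
    linarith
  -- the counting identity
  have hcount := theta_count h1 h2 h3 m
  -- evaluate the sum
  have hS : ∀ a ∈ Finset.Icc 1 m, ∀ b ∈ Finset.Icc 1 m,
      (∏ i : Fin 3, (walkSet m (![l1,l2,l3] i) a b).card) =
      if a = b then ∏ i : Fin 3, (wpair m (![l1,l2,l3] i)).1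
      else ∏ i : Fin 3, (wpair m (![l1,l2,l3] i)).2 := by
    intro a ha b hb
    rw [Finset.prod_congr rfl (fun i _ => walkSet_card m (![l1,l2,l3] i) a b ha hb)]
    by_cases hab : a = b
    · simp [hab]
    · simp [hab]
  set S := ∏ i : Fin 3, (wpair m (![l1,l2,l3] i)).1 with hSdef
  set D := ∏ i : Fin 3, (wpair m (![l1,l2,l3] i)).2 with hDdef
  have hsum : PChrom (thetaGraph l1 l2 l3) m = m * S + m * ((m-1) * D) := by
    rw [hcount, Finset.sum_product]
    have hinner : ∀ a ∈ Finset.Icc 1 m,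
        (∑ b ∈ Finset.Icc 1 m, ∏ i : Fin 3, (walkSet m (![l1,l2,l3] i) a b).card) =
        S + (m-1) * D := by
      intro a ha
      rw [Finset.sum_congr rfl (fun b hb => hS a ha b hb)]
      rw [← Finset.add_sum_erase _ _ ha, if_pos rfl]
      congr 1
      rw [Finset.sum_congr rfl (fun b hb =>
        if_neg (fun h => (Finset.mem_erase.1 hb).1 h.symm))]
      rw [Finset.sum_const, Finset.card_erase_of_mem ha, Nat.card_Icc]
      simp [mul_comm]
    rw [Finset.sum_congr rfl hinner, Finset.sum_const, Nat.card_Icc]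
    have : m + 1 - 1 = m := by omega
    rw [this, smul_eq_mul, Nat.mul_add]
  -- closed forms for the three path counts
  have hw1 := wpair_formula m hm l1
  have hw2 := wpair_formula m hm l2
  have hw3 := wpair_formula m hm l3
  have hSQ : (S : ℚ) * m^3 =
      (((m:ℚ)-1)^l1 + ((m:ℚ)-1)*(-1)^l1) * (((m:ℚ)-1)^l2 + ((m:ℚ)-1)*(-1)^l2) *
      (((m:ℚ)-1)^l3 + ((m:ℚ)-1)*(-1)^l3) := by
    rw [hSdef]
    rw [Fin.prod_univ_three]
    push_cast
    rw [← hw1.1, ← hw2.1, ← hw3.1]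
    ring
  have hDQ : (D : ℚ) * m^3 =
      (((m:ℚ)-1)^l1 - (-1)^l1) * (((m:ℚ)-1)^l2 - (-1)^l2) *
      (((m:ℚ)-1)^l3 - (-1)^l3) := by
    rw [hDdef]
    rw [Fin.prod_univ_three]
    push_cast
    rw [← hw1.2, ← hw2.2, ← hw3.2]
    ring
  have hcast : (PChrom (thetaGraph l1 l2 l3) m : ℚ) =
      (m:ℚ) * S + (m:ℚ) * (((m:ℚ)-1) * D) := by
    rw [hsum]
    push_cast [Nat.cast_sub hn1]
    ring
  rw [hcast]
  have hSQ' : (S : ℚ) = ((((m:ℚ)-1)^l1 + ((m:ℚ)-1)*(-1)^l1) *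
      (((m:ℚ)-1)^l2 + ((m:ℚ)-1)*(-1)^l2) *
      (((m:ℚ)-1)^l3 + ((m:ℚ)-1)*(-1)^l3)) / m^3 := by
    field_simp
    linarith [hSQ]
  have hDQ' : (D : ℚ) = ((((m:ℚ)-1)^l1 - (-1)^l1) * (((m:ℚ)-1)^l2 - (-1)^l2) *
      (((m:ℚ)-1)^l3 - (-1)^l3)) / m^3 := by
    field_simp
    linarith [hDQ]
  rw [hSQ', hDQ']
  have e1 : ((m:ℚ)-1)^(l1+1) - (-1)^l1 * ((m:ℚ)-1) = ((m:ℚ)-1) * (((m:ℚ)-1)^l1 - (-1)^l1) := by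
    ring
  have e2 : ((m:ℚ)-1)^(l2+1) - (-1)^l2 * ((m:ℚ)-1) = ((m:ℚ)-1) * (((m:ℚ)-1)^l2 - (-1)^l2) := by
    ring
  have e3 : ((m:ℚ)-1)^(l3+1) - (-1)^l3 * ((m:ℚ)-1) = ((m:ℚ)-1) * (((m:ℚ)-1)^l3 - (-1)^l3) := by
    ring
  rw [e1, e2, e3]
  field_simp
  ring
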